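/- In the impossibility construction (Z = B = {0,1,2}, classification loss, Q i.i.d. with mode 1, P as above), the Q-optimal learner predicts B_t = 1 for all t, the P-optimal comparator predicts B*_1 = 1 and for t ≥ 2 predicts 2 if Z_1 = 0 and 1 otherwise; consequently, the average per-round regret equals (T−1)/T when Z_1 = 0 and equals 0 when Z_1 ≠ 0. In particular, P(Δ ≥ (T−1)/T) = φ. -/
import Mathlib

open scoped Classical

private lemma argmin_q (φ ψ : ℝ)
    (hφ0 : 0 < φ) (hφ2 : φ < 1 / 2) (hψ0 : 0 < ψ) (hψ2 : ψ < 1 / 2 - φ)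
    (q : Fin 3 → ℝ)
    (hq : ∀ z, q z = if z = 0 then φ else if z = 1 then 1 - φ - ψ else ψ)
    (b : Fin 3)
    (hb : ∀ b', ∑ z, q z * (if b = z then (0 : ℝ) else 1) ≤
      ∑ z, q z * (if b' = z then (0 : ℝ) else 1)) : b = 1 := by
  have h3 : ∀ z : Fin 3, z = 0 ∨ z = 1 ∨ z = 2 := by decide
  rcases h3 b with h | h | h
  · have := hb 1; rw [h] at this
    simp [Fin.sum_univ_three, hq] at this; linarith
  · exact h
  · have := hb 1; rw [h] at this
    simp [Fin.sum_univ_three, hq] at this; linarith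

/-- Regret computation in the impossibility construction: the `Q`-optimal
learner always predicts `1`, the `P`-optimal comparator predicts `1` at `t = 1`
and, for `t ≥ 2`, predicts `2` if `Z_1 = 0` and `1` otherwise; consequently, on
the support of `P` the average per-round regret is `(T−1)/T` when `Z_1 = 0` and
`0` otherwise, and `P(Δ ≥ (T−1)/T) = φ`. -/
theorem stmt_17 (T : ℕ) (hT : 2 ≤ T) (φ ψ : ℝ)
    (hφ : φ ∈ Set.Ioo (0 : ℝ) (1 / 2)) (hψ : ψ ∈ Set.Ioo (0 : ℝ) (1 / 2 - φ))
    (q : Fin 3 → ℝ)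
    (hq : ∀ z, q z = if z = 0 then φ else if z = 1 then 1 - φ - ψ else ψ)
    (P : (Fin T → Fin 3) → ℝ)
    (hP : ∀ x, P x = if x ⟨0, by omega⟩ = 0 then
        (if ∀ t : Fin T, t ≠ ⟨0, by omega⟩ → x t = 2 then φ else 0)
      else ∏ t, q (x t))
    -- conditional kernels of `P` (as a function of the observed past)
    (κ : (t : Fin T) → (Fin t.val → Fin 3) → Fin 3 → ℝ)
    (hκ : ∀ (t : Fin T) (pfx : Fin t.val → Fin 3) (z : Fin 3),
      κ t pfx z = if h : t.val ≠ 0 then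
        (if pfx ⟨0, Nat.pos_of_ne_zero h⟩ = 0 then (if z = 2 then 1 else 0) else q z)
      else q z)
    -- `bQ` is Bayes optimal for `Q` (whose kernels are all `q`), `bP` for `P`
    (bQ bP : (t : Fin T) → (Fin t.val → Fin 3) → Fin 3)
    (hbQ : ∀ t pfx b', ∑ z, q z * (if bQ t pfx = z then (0 : ℝ) else 1) ≤
      ∑ z, q z * (if b' = z then (0 : ℝ) else 1))
    (hbP : ∀ t pfx b', ∑ z, κ t pfx z * (if bP t pfx = z then (0 : ℝ) else 1) ≤
      ∑ z, κ t pfx z * (if b' = z then (0 : ℝ) else 1))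
    (Δ : (Fin T → Fin 3) → ℝ)
    (hΔ : ∀ x, Δ x = (1 / (T : ℝ)) * ∑ t,
      ((if bQ t (fun i => x ⟨i.val, i.isLt.trans t.isLt⟩) = x t then (0 : ℝ) else 1)
        - (if bP t (fun i => x ⟨i.val, i.isLt.trans t.isLt⟩) = x t then (0 : ℝ) else 1))) :
    (∀ t pfx, bQ t pfx = 1) ∧
    (∀ (t : Fin T) (pfx : Fin t.val → Fin 3), bP t pfx =
      if h : t.val ≠ 0 then (if pfx ⟨0, Nat.pos_of_ne_zero h⟩ = 0 then 2 else 1) else 1) ∧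
    (∀ x, P x ≠ 0 →
      Δ x = if x ⟨0, by omega⟩ = 0 then ((T : ℝ) - 1) / T else 0) ∧
    ∑ x ∈ Finset.univ.filter (fun x : Fin T → Fin 3 => ((T : ℝ) - 1) / T ≤ Δ x), P x = φ := by
  have hT0 : (0 : ℝ) < (T : ℝ) := by positivity
  have h2T : (2 : ℝ) ≤ (T : ℝ) := by exact_mod_cast hT
  obtain ⟨hφ0, hφ2⟩ := hφ
  obtain ⟨hψ0, hψ2⟩ := hψ
  set i0 : Fin T := ⟨0, by omega⟩ with hi0
  -- bQ is always 1
  have HQ : ∀ t pfx, bQ t pfx = 1 := fun t pfx =>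
    argmin_q φ ψ hφ0 hφ2 hψ0 hψ2 q hq _ (hbQ t pfx)
  -- bP
  have HP : ∀ (t : Fin T) (pfx : Fin t.val → Fin 3), bP t pfx =
      if h : t.val ≠ 0 then (if pfx ⟨0, Nat.pos_of_ne_zero h⟩ = 0 then 2 else 1) else 1 := by
    intro t pfx
    by_cases h : t.val ≠ 0
    · rw [dif_pos h]
      by_cases h0 : pfx ⟨0, Nat.pos_of_ne_zero h⟩ = 0
      · rw [if_pos h0]
        have hk : ∀ z, κ t pfx z = if z = 2 then 1 else 0 := by
          intro z; rw [hκ, dif_pos h, if_pos h0]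
        have h2 := hbP t pfx 2
        simp only [hk, Fin.sum_univ_three] at h2
        have h3 : ∀ z : Fin 3, z = 0 ∨ z = 1 ∨ z = 2 := by decide
        rcases h3 (bP t pfx) with h' | h' | h'
        · rw [h'] at h2; simp at h2; linarith
        · rw [h'] at h2; simp at h2; linarith
        · exact h'
      · rw [if_neg h0]
        have hk : ∀ z, κ t pfx z = q z := by
          intro z; rw [hκ, dif_pos h, if_neg h0]
        refine argmin_q φ ψ hφ0 hφ2 hψ0 hψ2 q hq _ (fun b' => ?_)
        simpa only [hk] using hbP t pfx b'
    · rw [dif_neg h]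
      have hk : ∀ z, κ t pfx z = q z := by
        intro z; rw [hκ, dif_neg h]
      refine argmin_q φ ψ hφ0 hφ2 hψ0 hψ2 q hq _ (fun b' => ?_)
      simpa only [hk] using hbP t pfx b'
  -- `bP` applied to the observed prefix of `x`
  have hbPt : ∀ (x : Fin T → Fin 3) (t : Fin T),
      bP t (fun i => x ⟨i.val, i.isLt.trans t.isLt⟩) =
        if t.val ≠ 0 then (if x i0 = 0 then 2 else 1) else 1 := by
    intro x t
    rw [HP]
    by_cases h : t.val ≠ 0
    · rw [dif_pos h, if_pos h]
    · rw [dif_neg h, if_neg h]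
  -- Δ for x with x i0 ≠ 0 is 0 (unconditionally)
  have HΔ1 : ∀ x : Fin T → Fin 3, x i0 ≠ 0 → Δ x = 0 := by
    intro x hx
    rw [hΔ]
    have key : ∀ t : Fin T,
        ((if bQ t (fun i => x ⟨i.val, i.isLt.trans t.isLt⟩) = x t then (0:ℝ) else 1)
        - (if bP t (fun i => x ⟨i.val, i.isLt.trans t.isLt⟩) = x t then (0:ℝ) else 1)) = 0 := by
      intro t
      rw [HQ, hbPt]
      by_cases h : t.val ≠ 0
      · rw [if_pos h, if_neg hx]; ring
      · rw [if_neg h]; ring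
    rw [Finset.sum_congr rfl (fun t _ => key t)]
    simp
  -- Δ for the special sequence
  have HΔ0 : ∀ x : Fin T → Fin 3, x i0 = 0 → (∀ t : Fin T, t ≠ i0 → x t = 2) →
      Δ x = ((T : ℝ) - 1) / T := by
    intro x hx htail
    rw [hΔ]
    have key : ∀ t : Fin T,
        ((if bQ t (fun i => x ⟨i.val, i.isLt.trans t.isLt⟩) = x t then (0:ℝ) else 1)
        - (if bP t (fun i => x ⟨i.val, i.isLt.trans t.isLt⟩) = x t then (0:ℝ) else 1))
        = if t = i0 then 0 else 1 := by
      intro t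
      rw [HQ, hbPt]
      by_cases h : t.val ≠ 0
      · have ht : t ≠ i0 := by
          intro e; apply h; rw [e]
        rw [if_pos h, if_pos hx, htail t ht, if_neg ht]
        simp
      · have ht : t = i0 := by
          apply Fin.ext; simpa using h
        rw [if_neg h, if_pos ht, ht, hx]
        simp
    rw [Finset.sum_congr rfl (fun t _ => key t)]
    have e1 : ∑ t : Fin T, (if t = i0 then (0:ℝ) else 1)
        = ∑ t : Fin T, ((1:ℝ) - if t = i0 then 1 else 0) := by
      apply Finset.sum_congr rfl; intro t _
      by_cases h : t = i0 <;> simp [h]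
    rw [e1, Finset.sum_sub_distrib]
    simp only [Finset.sum_const, Finset.card_univ, Fintype.card_fin, nsmul_eq_mul, mul_one,
      Finset.sum_ite_eq', Finset.mem_univ, if_pos]
    field_simp
  -- third conjunct
  have HΔ : ∀ x, P x ≠ 0 → Δ x = if x i0 = 0 then ((T : ℝ) - 1) / T else 0 := by
    intro x hPx
    by_cases hx : x i0 = 0
    · rw [if_pos hx]
      rw [hP, if_pos hx] at hPx
      by_cases htail : ∀ t : Fin T, t ≠ i0 → x t = 2
      · exact HΔ0 x hx htail
      · rw [if_neg htail] at hPx; exact absurd rfl hPx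
    · rw [if_neg hx]; exact HΔ1 x hx
  refine ⟨HQ, HP, HΔ, ?_⟩
  -- final sum
  set x0 : Fin T → Fin 3 := fun t => if t = i0 then 0 else 2 with hx0
  have hx0i : x0 i0 = 0 := by simp [hx0]
  have hx0t : ∀ t : Fin T, t ≠ i0 → x0 t = 2 := by
    intro t ht; simp [hx0, ht]
  have hfrac : (0:ℝ) < ((T:ℝ) - 1) / T := div_pos (by linarith) hT0
  have hPx0 : P x0 = φ := by rw [hP, if_pos hx0i, if_pos hx0t]
  have hmem : x0 ∈ Finset.univ.filter (fun x : Fin T → Fin 3 => ((T : ℝ) - 1) / T ≤ Δ x) := by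
    simp only [Finset.mem_filter, Finset.mem_univ, true_and]
    rw [HΔ0 x0 hx0i hx0t]
  have heq : ∀ x ∈ Finset.univ.filter (fun x : Fin T → Fin 3 => ((T : ℝ) - 1) / T ≤ Δ x),
      P x = if x = x0 then φ else 0 := by
    intro x hx
    simp only [Finset.mem_filter, Finset.mem_univ, true_and] at hx
    by_cases hxx : x = x0
    · rw [if_pos hxx, hxx, hPx0]
    · rw [if_neg hxx]
      by_cases hx1 : x i0 = 0
      · rw [hP, if_pos hx1, if_neg]
        intro htail
        apply hxx
        funext t
        by_cases ht : t = i0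
        · rw [ht, hx1, hx0i]
        · rw [htail t ht, hx0t t ht]
      · exfalso
        rw [HΔ1 x hx1] at hx
        linarith
  rw [Finset.sum_congr rfl heq, Finset.sum_ite_eq' _ x0, if_pos hmem]
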